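/- Let p = 2 and r > 0, and let v₃₅ = a·2^k, v₄₅ = b·2^l with a, b ∈ ℤ₂^× and 0 ≤ k, l < r. If 2^r ∣ v₃₅v₄₅, 2^{r+1} ∣ v₃₅² + v₄₅² and v₃₅² − v₄₅², gcd(2^r, v₃₅, v₄₅, (v₃₅²+v₄₅²)/2^{r+1}·2) = 1 and gcd(2^r, v₃₅, v₄₅, v₃₅v₄₅/2^r, (v₃₅²−v₄₅²)/2^{r+1}·2) = 1, then r = 2·min(k,l) − 1 when k ≠ l, and r = 2k when k = l. -/
import Mathlib


section Aux

lemma pZ2_ne_zero : (2 : ℤ_[2]) ≠ 0 := by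
  have := (PadicInt.prime_p (p := 2)).ne_zero
  simpa using this

lemma not_isUnit_two : ¬ IsUnit (2 : ℤ_[2]) := by
  have := (PadicInt.prime_p (p := 2)).not_unit
  simpa using this

lemma two_dvd_iff (x : ℤ_[2]) : (2 : ℤ_[2]) ∣ x ↔ ¬ IsUnit x := by
  have h2 : ((2:ℕ) : ℤ_[2]) = 2 := by norm_num
  rw [← Ideal.mem_span_singleton, ← h2, ← PadicInt.maximalIdeal_eq_span_p,
    IsLocalRing.mem_maximalIdeal, mem_nonunits_iff]

lemma dichotomy (x : ℤ_[2]) : (2 : ℤ_[2]) ∣ x ∨ (2 : ℤ_[2]) ∣ (x - 1) := by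
  have key : ∀ y : ℤ_[2], PadicInt.toZMod y = 0 → (2:ℤ_[2]) ∣ y := by
    intro y hy
    have : y ∈ RingHom.ker (PadicInt.toZMod : ℤ_[2] →+* ZMod 2) := hy
    rw [PadicInt.ker_toZMod, PadicInt.maximalIdeal_eq_span_p] at this
    have := Ideal.mem_span_singleton.mp this
    simpa using this
  have : PadicInt.toZMod x = 0 ∨ PadicInt.toZMod x = 1 := by
    generalize PadicInt.toZMod x = z
    revert z; decide
  rcases this with h | h
  · exact Or.inl (key x h)
  · refine Or.inr (key _ ?_)
    simp [map_sub, h]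

lemma isUnit_add_of {u y : ℤ_[2]} (hu : IsUnit u) (hy : (2:ℤ_[2]) ∣ y) :
    IsUnit (u + y) := by
  by_contra h
  have h2 : (2:ℤ_[2]) ∣ (u + y) := (two_dvd_iff _).mpr h
  have : (2:ℤ_[2]) ∣ u := by
    have := dvd_sub h2 hy
    simpa using this
  exact not_isUnit_two (isUnit_of_dvd_unit this hu)

lemma eight_dvd_sq_sub_one {a : ℤ_[2]} (ha : IsUnit a) :
    (8 : ℤ_[2]) ∣ a ^ 2 - 1 := by
  have hnd : ¬ (2:ℤ_[2]) ∣ a := fun h => ((two_dvd_iff a).mp h) ha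
  have h1 : (2:ℤ_[2]) ∣ a - 1 := (dichotomy a).resolve_left hnd
  obtain ⟨t, ht⟩ := h1
  have h2 : (2:ℤ_[2]) ∣ t * (t + 1) := by
    rcases dichotomy t with h | h
    · exact h.mul_right _
    · obtain ⟨s, hs⟩ := h
      refine Dvd.dvd.mul_left ⟨s + 1, ?_⟩ t
      linear_combination hs
  obtain ⟨s, hs⟩ := h2
  exact ⟨s, by linear_combination (a + 1 + 2*t) * ht + 4 * hs⟩

/-- Key valuation comparison: if `2^m·u = 2^n·c` with `u` a unit, then `n ≤ m`,
and `c` is a unit iff `m = n`. -/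
lemma pow_mul_unit_eq {m n : ℕ} {u c : ℤ_[2]} (hu : IsUnit u)
    (h : (2:ℤ_[2])^m * u = 2^n * c) : n ≤ m ∧ (IsUnit c ↔ m = n) := by
  obtain ⟨v, hv⟩ := hu.exists_right_inv
  have hdvd : (2:ℤ_[2])^n ∣ 2^m := by
    refine ⟨c * v, ?_⟩
    calc (2:ℤ_[2])^m = 2^m * u * v := by rw [mul_assoc, hv, mul_one]
    _ = 2^n * (c * v) := by rw [h, mul_assoc]
  have hnm : n ≤ m := by
    rwa [pow_dvd_pow_iff pZ2_ne_zero not_isUnit_two] at hdvd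
  have hc : c = 2^(m-n) * u := by
    have h0 : (2:ℤ_[2])^n ≠ 0 := pow_ne_zero _ pZ2_ne_zero
    apply mul_left_cancel₀ h0
    rw [← h, ← mul_assoc, ← pow_add, Nat.add_sub_cancel' hnm]
  refine ⟨hnm, ?_, ?_⟩
  · intro hcu
    by_contra hne
    have hpos : 1 ≤ m - n := by omega
    have : (2:ℤ_[2]) ∣ c := by
      rw [hc]
      exact Dvd.dvd.mul_right (dvd_pow_self 2 (by omega : m - n ≠ 0)) u
    exact (two_dvd_iff c).mp this hcu
  · intro hmn
    rw [hc, hmn, Nat.sub_self, pow_zero, one_mul]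
    exact hu

lemma span_has_unit {S : Set ℤ_[2]} (h : Ideal.span S = ⊤) : ∃ x ∈ S, IsUnit x := by
  by_contra h'
  push_neg at h'
  have hle : Ideal.span S ≤ IsLocalRing.maximalIdeal ℤ_[2] :=
    Ideal.span_le.mpr fun x hx =>
      (IsLocalRing.mem_maximalIdeal x).mpr (mem_nonunits_iff.mpr (h' x hx))
  rw [h] at hle
  exact (IsLocalRing.maximalIdeal.isMaximal ℤ_[2]).ne_top (top_le_iff.mp hle)

/-- The case `k < l`. -/
lemma main_aux {r k l : ℕ} (hr : 0 < r) (hkl : k < l) {a b c : ℤ_[2]}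
    (ha : IsUnit a) (hb : IsUnit b)
    (hc : (a * (2 : ℤ_[2]) ^ k) ^ 2 + (b * (2 : ℤ_[2]) ^ l) ^ 2
        = 2 * (2 : ℤ_[2]) ^ r * c)
    (hOr : IsUnit ((2:ℤ_[2])^r) ∨ IsUnit (a * (2:ℤ_[2])^k)
        ∨ IsUnit (b * (2:ℤ_[2])^l) ∨ IsUnit c) :
    r = 2 * k - 1 := by
  obtain ⟨j, hj, rfl⟩ : ∃ j, 0 < j ∧ l = k + j := ⟨l - k, by omega, by omega⟩
  set U : ℤ_[2] := a^2 + 2^(2*j) * b^2 with hU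
  have hUu : IsUnit U := by
    refine isUnit_add_of (ha.pow 2) ?_
    exact Dvd.dvd.mul_right (dvd_pow_self 2 (by omega : 2*j ≠ 0)) _
  have hc2 : (2:ℤ_[2])^(2*k) * U = 2^(r+1) * c := by
    rw [hU]
    linear_combination hc
  obtain ⟨hle, hiff⟩ := pow_mul_unit_eq hUu hc2
  have hk1 : 1 ≤ k := by omega
  have hcu : IsUnit c := by
    rcases hOr with h | h | h | h
    · exact absurd h (((two_dvd_iff _).mp (dvd_pow_self 2 hr.ne')))
    · exact absurd h (((two_dvd_iff _).mp
        (Dvd.dvd.mul_left (dvd_pow_self 2 (by omega : k ≠ 0)) a)))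
    · exact absurd h (((two_dvd_iff _).mp
        (Dvd.dvd.mul_left (dvd_pow_self 2 (by omega : k + j ≠ 0)) b)))
    · exact h
  have := hiff.mp hcu
  omega

end Aux

/-- Let `p = 2`, `r > 0`, and `v₃₅ = a·2^k`, `v₄₅ = b·2^l` with `a, b ∈ ℤ₂^×`,
`0 ≤ k, l < r`.  Suppose `2^r ∣ v₃₅·v₄₅` (with quotient `d`), `2^{r+1} = 2·2^r`
divides `v₃₅² + v₄₅²` (quotient `c`) and `v₃₅² − v₄₅²` (quotient `e`), and the
coprimality conditions `gcd(2^r, v₃₅, v₄₅, (v₃₅²+v₄₅²)/(2·2^r)) = 1` and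
`gcd(2^r, v₃₅, v₄₅, v₃₅v₄₅/2^r, (v₃₅²−v₄₅²)/(2·2^r)) = 1` hold (phrased as the
corresponding ideals of `ℤ₂` being the unit ideal).  Then `r = 2·min(k,l) − 1`
when `k ≠ l`, and `r = 2k` when `k = l`. -/
theorem so42_alpha_coprimality_p_two (r k l : ℕ) (hr : 0 < r) (hk : k < r) (hl : l < r)
    (a b c d e : ℤ_[2]) (ha : IsUnit a) (hb : IsUnit b)
    (hc : (a * (2 : ℤ_[2]) ^ k) ^ 2 + (b * (2 : ℤ_[2]) ^ l) ^ 2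
        = 2 * (2 : ℤ_[2]) ^ r * c)
    (hd : (a * (2 : ℤ_[2]) ^ k) * (b * (2 : ℤ_[2]) ^ l) = (2 : ℤ_[2]) ^ r * d)
    (he : (a * (2 : ℤ_[2]) ^ k) ^ 2 - (b * (2 : ℤ_[2]) ^ l) ^ 2
        = 2 * (2 : ℤ_[2]) ^ r * e)
    (h1 : Ideal.span ({(2 : ℤ_[2]) ^ r, a * (2 : ℤ_[2]) ^ k,
        b * (2 : ℤ_[2]) ^ l, c} : Set ℤ_[2]) = ⊤)
    (h2 : Ideal.span ({(2 : ℤ_[2]) ^ r, a * (2 : ℤ_[2]) ^ k,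
        b * (2 : ℤ_[2]) ^ l, d, e} : Set ℤ_[2]) = ⊤) :
    (k ≠ l → r = 2 * min k l - 1) ∧ (k = l → r = 2 * k) := by
  have hOr : IsUnit ((2:ℤ_[2])^r) ∨ IsUnit (a * (2:ℤ_[2])^k)
      ∨ IsUnit (b * (2:ℤ_[2])^l) ∨ IsUnit c := by
    obtain ⟨x, hx, hxu⟩ := span_has_unit h1
    simp only [Set.mem_insert_iff, Set.mem_singleton_iff] at hx
    rcases hx with rfl | rfl | rfl | rfl
    · exact Or.inl hxu
    · exact Or.inr (Or.inl hxu)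
    · exact Or.inr (Or.inr (Or.inl hxu))
    · exact Or.inr (Or.inr (Or.inr hxu))
  rcases lt_trichotomy k l with hkl | rfl | hlk
  · have := main_aux hr hkl ha hb hc hOr
    exact ⟨fun _ => by omega, fun h => absurd h (by omega)⟩
  · -- case k = l
    obtain ⟨s, hs⟩ := eight_dvd_sq_sub_one ha
    obtain ⟨t, ht⟩ := eight_dvd_sq_sub_one hb
    set w : ℤ_[2] := 1 + 4 * (s + t) with hw
    have hwu : IsUnit w := isUnit_add_of isUnit_one ⟨2 * (s + t), by ring⟩
    have hc2 : (2:ℤ_[2])^(2*k+1) * w = 2^(r+1) * c := by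
      rw [hw]
      linear_combination hc - (2:ℤ_[2])^(2*k) * hs - (2:ℤ_[2])^(2*k) * ht
    obtain ⟨hle, hiff⟩ := pow_mul_unit_eq hwu hc2
    have hk1 : 1 ≤ k := by omega
    have hcu : IsUnit c := by
      rcases hOr with h | h | h | h
      · exact absurd h (((two_dvd_iff _).mp (dvd_pow_self 2 hr.ne')))
      · exact absurd h (((two_dvd_iff _).mp
          (Dvd.dvd.mul_left (dvd_pow_self 2 (by omega : k ≠ 0)) a)))
      · exact absurd h (((two_dvd_iff _).mp
          (Dvd.dvd.mul_left (dvd_pow_self 2 (by omega : k ≠ 0)) b)))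
      · exact h
    have := hiff.mp hcu
    exact ⟨fun h => absurd rfl h, fun _ => by omega⟩
  · have hc' : (b * (2 : ℤ_[2]) ^ l) ^ 2 + (a * (2 : ℤ_[2]) ^ k) ^ 2
        = 2 * (2 : ℤ_[2]) ^ r * c := by linear_combination hc
    have hOr' : IsUnit ((2:ℤ_[2])^r) ∨ IsUnit (b * (2:ℤ_[2])^l)
        ∨ IsUnit (a * (2:ℤ_[2])^k) ∨ IsUnit c := by tauto
    have := main_aux hr hlk hb ha hc' hOr'
    exact ⟨fun _ => by omega, fun h => absurd h (by omega)⟩
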